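/- Let D be a finite set with |D| = n ≥ 1 and let m ≥ 1. Enumerate the elements of the symmetric group Sym(D) as g_1, …, g_{n!}, and for each r let k_{r1}, …, k_{rℓ_r} be the cycle type of g_r. Then the number of m-endomorphisms on the free semigroup D⁺, up to combinatorial equivalence, equals (1/n!) · Σ_{r=1}^{n!} ∏_{i=1}^{ℓ_r} ( Σ_{k=1}^{m} ( Σ_{j | k_{ri}} j·c(g_r, j) )^k ). -/

import Mathlib

/-- The cycle type of a permutation of a finite set, *including* fixed points as
cycles of length `1` (so the entries sum to the cardinality of the set). -/
def fullCycleType {D : Type*} [Fintype D] [DecidableEq D] (g : Equiv.Perm D) : Multiset ℕ :=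
  g.cycleType + Multiset.replicate (Fintype.card D - g.support.card) 1

/-- The number of cycles of length `j` in the cycle decomposition of `g`
(fixed points counted as cycles of length `1`). -/
def cycleCount {D : Type*} [Fintype D] [DecidableEq D] (g : Equiv.Perm D) (j : ℕ) : ℕ :=
  Multiset.count j (fullCycleType g)

open Equiv Equiv.Perm FreeSemigroup MulAction

namespace MEndAux

variable {α : Type*}

def toL (w : FreeSemigroup α) : List α := w.head :: w.tail

theorem toL_injective : Function.Injective (toL (α := α)) := by
  rintro ⟨a, l⟩ ⟨b, m⟩ h
  simpa [toL, FreeSemigroup.ext_iff] using h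

theorem toL_mul (x y : FreeSemigroup α) : toL (x * y) = toL x ++ toL y := by
  cases x; cases y; simp [toL]

theorem length_eq_toL (w : FreeSemigroup α) : w.length = (toL w).length := by
  simp [toL, FreeSemigroup.length]

theorem one_le_length (w : FreeSemigroup α) : 1 ≤ w.length := by
  simp [FreeSemigroup.length]

theorem toL_map {β : Type*} (f : α → β) (w : FreeSemigroup α) :
    toL (map f w) = (toL w).map f := by
  induction w using FreeSemigroup.recOnMul with
  | ih1 x => rfl
  | ih2 x y hx hy => rw [map_mul, toL_mul, toL_mul, List.map_append, ← hy]; rfl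

theorem map_map' {β γ : Type*} (f : β → γ) (g : α → β) (w : FreeSemigroup α) :
    map f (map g w) = map (f ∘ g) w :=
  toL_injective (by simp [toL_map, List.map_map])

theorem map_id' (w : FreeSemigroup α) : map id w = w :=
  toL_injective (by simp [toL_map])

theorem list_map_eq_self {f : α → α} : ∀ {l : List α}, l.map f = l → ∀ x ∈ l, f x = x := by
  intro l
  induction l with
  | nil => simp
  | cons a t ih =>
    intro h x hx
    simp only [List.map_cons, List.cons.injEq] at h
    rcases List.mem_cons.mp hx with hx | hx
    · exact hx ▸ h.1
    · exact ih h.2 x hx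


def lenEquiv (P : α → Prop) (k : ℕ) :
    {w : FreeSemigroup α // w.length = k + 1 ∧ ∀ x ∈ toL w, P x} ≃ (Fin (k + 1) → {x // P x}) where
  toFun w i := ⟨(toL w.1).get (Fin.cast (by rw [← length_eq_toL, w.2.1]) i),
    w.2.2 _ (List.get_mem _ _)⟩
  invFun f := ⟨⟨(f 0).1, List.ofFn fun i : Fin k => (f i.succ).1⟩,
    by simp [FreeSemigroup.length], by
      have : toL ⟨(f 0).1, List.ofFn fun i : Fin k => (f i.succ).1⟩
          = List.ofFn fun i : Fin (k+1) => (f i).1 := by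
        rw [List.ofFn_succ]; rfl
      rw [this]
      intro x hx
      obtain ⟨i, hi⟩ := List.mem_ofFn.mp hx
      exact hi ▸ (f i).2⟩
  left_inv w := by
    apply Subtype.ext; apply toL_injective
    have : toL ⟨((toL w.1).get (Fin.cast (by rw [← length_eq_toL, w.2.1]) 0)),
        List.ofFn fun i : Fin k => (toL w.1).get (Fin.cast (by rw [← length_eq_toL, w.2.1]) i.succ)⟩
        = List.ofFn fun i : Fin (k+1) => (toL w.1).get (Fin.cast (by rw [← length_eq_toL, w.2.1]) i) := by
      rw [List.ofFn_succ]; rfl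
    rw [this]
    apply List.ext_get (by simp [← length_eq_toL, w.2.1])
    intro i h1 h2
    cases i with
    | zero => simp
    | succ i => simp [List.getElem_ofFn]
  right_inv f := by
    funext i
    apply Subtype.ext
    show (toL ⟨(f 0).1, List.ofFn fun i : Fin k => (f i.succ).1⟩).get _ = (f i).1
    have : toL ⟨(f 0).1, List.ofFn fun i : Fin k => (f i.succ).1⟩
        = List.ofFn fun i : Fin (k+1) => (f i).1 := by
      rw [List.ofFn_succ]; rfl
    rw [List.get_of_eq this, List.get_ofFn]
    congr 1

def splitEquiv (P : α → Prop) (m : ℕ) :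
    {w : FreeSemigroup α // w.length ≤ m + 1 ∧ ∀ x ∈ toL w, P x} ≃
      ({w : FreeSemigroup α // w.length ≤ m ∧ ∀ x ∈ toL w, P x} ⊕
        {w : FreeSemigroup α // w.length = m + 1 ∧ ∀ x ∈ toL w, P x}) where
  toFun w := if h : w.1.length ≤ m then .inl ⟨w.1, h, w.2.2⟩
    else .inr ⟨w.1, by omega, w.2.2⟩
  invFun x := x.elim (fun w => ⟨w.1, by omega, w.2.2⟩) (fun w => ⟨w.1, le_of_eq w.2.1, w.2.2⟩)
  left_inv w := by by_cases h : w.1.length ≤ m <;> simp [h]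
  right_inv x := by
    rcases x with w | w
    · simp [w.2.1]
    · have : ¬ w.1.length ≤ m := by have := w.2.1; omega
      simp [this]

theorem finite_words [Finite α] (P : α → Prop) (m : ℕ) :
    Finite {w : FreeSemigroup α // w.length ≤ m ∧ ∀ x ∈ toL w, P x} := by
  induction m with
  | zero =>
    have : IsEmpty {w : FreeSemigroup α // w.length ≤ 0 ∧ ∀ x ∈ toL w, P x} :=
      ⟨fun w => by have := one_le_length w.1; omega⟩
    infer_instance
  | succ m ih =>
    have h2 : Finite {w : FreeSemigroup α // w.length = m + 1 ∧ ∀ x ∈ toL w, P x} :=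
      Finite.of_equiv _ (lenEquiv P m).symm
    exact Finite.of_equiv _ (splitEquiv P m).symm

theorem card_words [Finite α] (P : α → Prop) (m : ℕ) :
    Nat.card {w : FreeSemigroup α // w.length ≤ m ∧ ∀ x ∈ toL w, P x}
      = ∑ k ∈ Finset.Icc 1 m, Nat.card {x // P x} ^ k := by
  induction m with
  | zero =>
    have : IsEmpty {w : FreeSemigroup α // w.length ≤ 0 ∧ ∀ x ∈ toL w, P x} :=
      ⟨fun w => by have := one_le_length w.1; omega⟩
    rw [Nat.card_of_isEmpty]
    simp
  | succ m ih =>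
    have h2 : Finite {w : FreeSemigroup α // w.length = m + 1 ∧ ∀ x ∈ toL w, P x} :=
      Finite.of_equiv _ (lenEquiv P m).symm
    have h1 := finite_words P m (α := α)
    rw [Nat.card_congr (splitEquiv P m), Nat.card_sum, ih,
      Nat.card_congr (lenEquiv P m), Nat.card_fun,
      Finset.sum_Icc_succ_top (by omega : 1 ≤ m + 1)]
    simp [Nat.card_eq_fintype_card]


variable {D : Type*} [Fintype D] [DecidableEq D] (g : Equiv.Perm D)

def len (d : D) : ℕ := if g d = d then 1 else (g.cycleOf d).support.card

theorem one_le_len (d : D) : 1 ≤ len g d := by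
  unfold len
  split
  · exact le_refl 1
  · next h =>
    have : d ∈ (g.cycleOf d).support :=
      mem_support_cycleOf_iff.mpr ⟨SameCycle.rfl, mem_support.mpr h⟩
    exact Nat.one_le_iff_ne_zero.mpr (Finset.card_ne_zero_of_mem this)

theorem zpow_apply_eq_iff_len_dvd (d : D) (i : ℤ) :
    (g ^ i) d = d ↔ (len g d : ℤ) ∣ i := by
  by_cases h : g d = d
  · simp only [len, if_pos h]
    simp [zpow_apply_eq_self_of_apply_eq_self h i]
  · rw [len, if_neg h]
    set c := g.cycleOf d with hc
    have hcyc : c.IsCycle := g.isCycle_cycleOf h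
    have hcd : c d ≠ d := by rw [hc, cycleOf_apply_self]; exact h
    have hgd : (g ^ i) d = (c ^ i) d := (g.cycleOf_zpow_apply_self d i).symm
    obtain ⟨j, hj⟩ : ∃ j : ℕ, c ^ i = c ^ j := by
      refine ⟨(i % (orderOf c : ℤ)).toNat, ?_⟩
      rw [← zpow_natCast, Int.toNat_of_nonneg
        (Int.emod_nonneg _ (by exact_mod_cast (orderOf_pos c).ne')), zpow_mod_orderOf]
    have key : (c ^ i) d = d ↔ c ^ i = 1 := by
      rw [hj, ← hcyc.pow_eq_one_iff' hcd]
    rw [hgd, key, ← orderOf_dvd_iff_zpow_eq_one, hcyc.orderOf]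

theorem pow_apply_eq_iff_len_dvd (d : D) (k : ℕ) :
    (g ^ k) d = d ↔ len g d ∣ k := by
  have := zpow_apply_eq_iff_len_dvd g d (k : ℤ)
  rw [zpow_natCast] at this
  rw [this, Int.natCast_dvd_natCast]

theorem sameCycle_len_eq {d e : D} (h : g.SameCycle d e) : len g d = len g e := by
  by_cases hd : g d = d
  · have : d = e := h.eq_of_left hd
    rw [this]
  · have he : ¬ g e = e := by rw [← h.apply_eq_self_iff]; exact hd
    rw [len, len, if_neg hd, if_neg he, h.cycleOf_eq]

theorem card_sameCycle_class (d : D) :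
    (Finset.univ.filter fun e => g.SameCycle d e).card = len g d := by
  by_cases h : g d = d
  · rw [len, if_pos h]
    have : (Finset.univ.filter fun e => g.SameCycle d e) = {d} := by
      ext e
      simp only [Finset.mem_filter, Finset.mem_univ, true_and, Finset.mem_singleton]
      exact ⟨fun hsc => (hsc.eq_of_left h).symm, fun he => he ▸ SameCycle.rfl⟩
    rw [this, Finset.card_singleton]
  · rw [len, if_neg h]
    congr 1
    ext e
    simp only [Finset.mem_filter, Finset.mem_univ, true_and, mem_support_cycleOf_iff]
    exact ⟨fun hsc => ⟨hsc, mem_support.mpr h⟩, fun he => he.1⟩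

def scSetoid : Setoid D := ⟨g.SameCycle, SameCycle.equivalence g⟩

abbrev Qt := Quotient (scSetoid g)

instance : Fintype (Qt g) :=
  @Quotient.fintype _ _ (scSetoid g) (fun a b => decidable_of_iff (g.SameCycle a b) Iff.rfl)

noncomputable def szQ (c : Qt g) : ℕ := len g c.out

theorem szQ_mk (d : D) : szQ g (⟦d⟧ : Qt g) = len g d :=
  sameCycle_len_eq g (Quotient.mk_out (s := scSetoid g) d)


def sz' : (Equiv.Perm D) ⊕ D → ℕ := Sum.elim (fun c => c.support.card) (fun _ => 1)

def theta : Qt g → (Equiv.Perm D) ⊕ D :=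
  Quotient.lift (fun d => if g d = d then Sum.inr d else Sum.inl (g.cycleOf d))
    (by
      intro a b hab
      have hab' : g.SameCycle a b := hab
      by_cases ha : g a = a
      · have : a = b := hab'.eq_of_left ha
        rw [this]
      · have hb : ¬ g b = b := by rw [← hab'.apply_eq_self_iff]; exact ha
        simp only [if_neg ha, if_neg hb, hab'.cycleOf_eq])

theorem theta_mk (d : D) :
    theta g (⟦d⟧ : Qt g) = if g d = d then Sum.inr d else Sum.inl (g.cycleOf d) := rfl

theorem szQ_eq_sz'_theta (c : Qt g) : szQ g c = sz' (theta g c) := by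
  induction c using Quotient.ind with
  | _ d =>
    rw [szQ_mk, theta_mk]
    by_cases h : g d = d
    · rw [if_pos h, len, if_pos h]; rfl
    · rw [if_neg h, len, if_neg h]; rfl

theorem sameCycle_of_cycleOf_eq {d e : D} (he : g e ≠ e)
    (h : g.cycleOf d = g.cycleOf e) : g.SameCycle d e := by
  have h1 : e ∈ (g.cycleOf e).support :=
    mem_support_cycleOf_iff.mpr ⟨SameCycle.rfl, mem_support.mpr he⟩
  rw [← h] at h1
  exact (mem_support_cycleOf_iff.mp h1).1

theorem theta_injOn : Set.InjOn (theta g) (Finset.univ : Finset (Qt g)) := by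
  intro c1 _ c2 _ h
  induction c1 using Quotient.ind with
  | _ d =>
  induction c2 using Quotient.ind with
  | _ e =>
  rw [theta_mk, theta_mk] at h
  by_cases hd : g d = d <;> by_cases he : g e = e
  · rw [if_pos hd, if_pos he] at h
    exact congrArg _ (Sum.inr_injective h)
  · rw [if_pos hd, if_neg he] at h; exact absurd h (by simp)
  · rw [if_neg hd, if_pos he] at h; exact absurd h (by simp)
  · rw [if_neg hd, if_neg he] at h
    exact Quotient.sound (sameCycle_of_cycleOf_eq g he (Sum.inl_injective h))

theorem theta_image :
    Finset.image (theta g) Finset.univ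
      = (g.cycleFactorsFinset.map ⟨Sum.inl, Sum.inl_injective⟩) ∪
        ((g.support)ᶜ.map ⟨Sum.inr, Sum.inr_injective⟩) := by
  ext x
  simp only [Finset.mem_image, Finset.mem_union, Finset.mem_map, Function.Embedding.coeFn_mk,
    Finset.mem_compl, Finset.mem_univ, true_and]
  constructor
  · rintro ⟨c, rfl⟩
    induction c using Quotient.ind with
    | _ d =>
      rw [theta_mk]
      by_cases h : g d = d
      · rw [if_pos h]
        exact Or.inr ⟨d, by simp [mem_support, h], rfl⟩
      · rw [if_neg h]
        exact Or.inl ⟨g.cycleOf d, cycleOf_mem_cycleFactorsFinset_iff.mpr (mem_support.mpr h), rfl⟩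
  · rintro (⟨c, hc, rfl⟩ | ⟨d, hd, rfl⟩)
    · have hcyc : c.IsCycle := (mem_cycleFactorsFinset_iff.mp hc).1
      obtain ⟨a, ha⟩ : c.support.Nonempty := by
        rw [← Finset.card_pos]
        have := hcyc.two_le_card_support
        omega
      have hga : g a ≠ a := by
        have := (mem_cycleFactorsFinset_iff.mp hc).2 a ha
        rw [← this]
        exact mem_support.mp ha
      refine ⟨⟦a⟧, ?_⟩
      rw [theta_mk, if_neg hga, ← cycle_is_cycleOf ha hc]
    · refine ⟨⟦d⟧, ?_⟩
      rw [theta_mk, if_pos (by simpa [mem_support] using hd)]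

theorem multiset_szQ_eq :
    (Finset.univ : Finset (Qt g)).val.map (szQ g) = fullCycleType g := by
  have h1 : (Finset.univ : Finset (Qt g)).val.map (szQ g)
      = (Finset.univ : Finset (Qt g)).val.map (sz' ∘ theta g) :=
    Multiset.map_congr rfl (fun c _ => szQ_eq_sz'_theta g c)
  rw [h1, ← Multiset.map_map, ← Finset.image_val_of_injOn (theta_injOn g), theta_image]
  have hdisj : Disjoint (g.cycleFactorsFinset.map ⟨Sum.inl, Sum.inl_injective⟩)
      (((g.support)ᶜ).map ⟨Sum.inr, Sum.inr_injective⟩) := by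
    simp [Finset.disjoint_left]
  rw [← Finset.disjUnion_eq_union _ _ hdisj,
    show (Finset.disjUnion _ _ hdisj).val = _ + _ from rfl, Multiset.map_add,
    Finset.map_val, Finset.map_val, Multiset.map_map, Multiset.map_map]
  unfold fullCycleType
  congr 1
  all_goals first
    | (rw [cycleType_def]; rfl)
    | (rw [show (sz' ∘ ⇑(⟨Sum.inr, Sum.inr_injective⟩ : D ↪ (Equiv.Perm D ⊕ D))) = (fun (_ : D) => 1) from rfl,
        Multiset.map_const']
       exact congrArg (fun n => Multiset.replicate n 1) (Finset.card_compl _))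


theorem sum_ite_szQ (L : ℕ) (hL : L ≠ 0) :
    (∑ c : Qt g, if szQ g c ∣ L then szQ g c else 0)
      = ∑ j ∈ L.divisors, j * cycleCount g j := by
  classical
  have h1 : (∑ c : Qt g, if szQ g c ∣ L then szQ g c else 0)
      = (((Finset.univ : Finset (Qt g)).val.map (szQ g)).map
          (fun t => if t ∣ L then t else 0)).sum := by
    rw [Multiset.map_map]
    rfl
  rw [h1, multiset_szQ_eq]
  set M := fullCycleType g with hM
  rw [Finset.sum_multiset_map_count]
  set T := M.toFinset ∪ L.divisors with hT
  have e1 : ∑ t ∈ M.toFinset, M.count t • (if t ∣ L then t else 0)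
      = ∑ t ∈ T, M.count t • (if t ∣ L then t else 0) := by
    apply Finset.sum_subset Finset.subset_union_left
    intro x _ hx
    rw [Multiset.count_eq_zero_of_notMem (by simpa using hx), zero_smul]
  have e2 : ∑ j ∈ L.divisors, j * cycleCount g j
      = ∑ t ∈ T, M.count t • (if t ∣ L then t else 0) := by
    rw [show ∀ s : Finset ℕ, (∑ t ∈ s, M.count t • (if t ∣ L then t else 0))
        = ∑ t ∈ s, (if t ∣ L then t * M.count t else 0) from
      fun s => Finset.sum_congr rfl (fun t _ => by
        by_cases h : t ∣ L <;> simp [h, mul_comm])]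
    apply Finset.sum_subset_zero_on_sdiff Finset.subset_union_right
    · intro x hx
      rw [if_neg]
      intro hdvd
      exact (Finset.mem_sdiff.mp hx).2 (Nat.mem_divisors.mpr ⟨hdvd, hL⟩)
    · intro x hx
      rw [if_pos (Nat.dvd_of_mem_divisors hx)]
      rfl
  rw [e1, e2]

theorem card_fixed_pow (L : ℕ) (hL : L ≠ 0) :
    (Finset.univ.filter fun x : D => (g ^ L) x = x).card
      = ∑ j ∈ L.divisors, j * cycleCount g j := by
  classical
  rw [← sum_ite_szQ g L hL]
  rw [Finset.card_eq_sum_card_fiberwise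
    (f := fun x : D => (⟦x⟧ : Qt g)) (t := Finset.univ) (fun x _ => Finset.mem_univ _)]
  apply Finset.sum_congr rfl
  intro c _
  induction c using Quotient.ind with
  | _ d =>
  rw [szQ_mk]
  by_cases h : len g d ∣ L
  · rw [if_pos h, ← card_sameCycle_class g d]
    congr 1
    ext x
    simp only [Finset.mem_filter, Finset.mem_univ, true_and]
    constructor
    · rintro ⟨-, hx⟩
      exact (Quotient.exact hx : g.SameCycle x d).symm
    · intro hx
      have hsc : g.SameCycle x d := hx.symm
      refine ⟨?_, Quotient.sound (hsc : (scSetoid g).r x d)⟩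
      rw [pow_apply_eq_iff_len_dvd, sameCycle_len_eq g hsc]
      exact h
  · rw [if_neg h]
    rw [Finset.card_eq_zero]
    ext x
    simp only [Finset.mem_filter, Finset.mem_univ, true_and, Finset.notMem_empty, iff_false]
    rintro ⟨hx1, hx2⟩
    have hsc : g.SameCycle x d := Quotient.exact hx2
    rw [pow_apply_eq_iff_len_dvd, sameCycle_len_eq g hsc] at hx1
    exact h hx1


section Action
variable (m : ℕ)

abbrev Wrd (D : Type*) (m : ℕ) := {w : FreeSemigroup D // w.length ≤ m}
abbrev Xsp (D : Type*) (m : ℕ) := D → Wrd D m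

instance : MulAction (Equiv.Perm D) (Xsp D m) where
  smul σ f := fun d => ⟨map ⇑σ (f (σ⁻¹ d)).1, by rw [length_map]; exact (f _).2⟩
  one_smul f := by
    funext d
    apply Subtype.ext
    show map ⇑(1 : Equiv.Perm D) (f ((1 : Equiv.Perm D)⁻¹ d)).1 = (f d).1
    simp only [inv_one, Equiv.Perm.coe_one, id_eq]
    exact map_id' _
  mul_smul σ τ f := by
    funext d
    apply Subtype.ext
    show map ⇑(σ * τ) (f ((σ * τ)⁻¹ d)).1 = map ⇑σ (map ⇑τ (f (τ⁻¹ (σ⁻¹ d))).1)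
    rw [map_map', ← Equiv.Perm.coe_mul, mul_inv_rev]
    rfl

theorem smul_apply (σ : Equiv.Perm D) (f : Xsp D m) (d : D) :
    ((σ • f) d).1 = map ⇑σ (f (σ⁻¹ d)).1 := rfl

theorem fixed_equivar {f : Xsp D m} (hf : f ∈ fixedBy (Xsp D m) g) (i : ℤ) (x : D) :
    (f ((g ^ i) x)).1 = map ⇑(g ^ i) (f x).1 := by
  have hg : g ∈ stabilizer (Equiv.Perm D) f := hf
  have h1 : (g ^ i) • f = f := mem_stabilizer_iff.mp (zpow_mem hg i)
  conv_lhs => rw [← h1]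
  rw [smul_apply]
  rw [← Equiv.Perm.mul_apply, inv_mul_cancel, Equiv.Perm.one_apply]

theorem map_zpow_congr {L : ℕ} (w : FreeSemigroup D) (hw : ∀ x ∈ toL w, (g ^ L) x = x)
    {a b : ℤ} (h : (L : ℤ) ∣ a - b) : map ⇑(g ^ a) w = map ⇑(g ^ b) w := by
  apply toL_injective
  rw [toL_map, toL_map]
  apply List.map_congr_left
  intro x hx
  obtain ⟨k, hk⟩ := h
  have h1 : ((g ^ (L : ℤ)) ^ k) x = x := by
    have : (g ^ (L : ℤ)) x = x := by rw [zpow_natCast]; exact hw x hx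
    exact zpow_apply_eq_self_of_apply_eq_self this k
  have h2 : (g ^ (a - b)) x = x := by rw [hk, zpow_mul]; exact h1
  have h3 : g ^ a = g ^ b * g ^ (a - b) := by rw [← zpow_add, add_sub_cancel]
  rw [h3, Equiv.Perm.mul_apply, h2]

theorem zpow_sub_fix {a b : ℤ} {x y : D} (ha : (g ^ a) x = y) (hb : (g ^ b) x = y) :
    (g ^ (a - b)) x = x := by
  apply (g ^ b).injective
  have h3 : g ^ b * g ^ (a - b) = g ^ a := by rw [← zpow_add, add_sub_cancel]
  rw [← Equiv.Perm.mul_apply, h3, ha, hb]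

def Yt (L : ℕ) := {w : FreeSemigroup D // w.length ≤ m ∧ ∀ x ∈ toL w, (g ^ L) x = x}

noncomputable def expn (d : D) : ℤ :=
  (Quotient.mk_out (s := scSetoid g) d : ∃ i : ℤ, (g ^ i) ((⟦d⟧ : Qt g).out) = d).choose

theorem expn_spec (d : D) : (g ^ expn g d) ((⟦d⟧ : Qt g).out) = d :=
  (Quotient.mk_out (s := scSetoid g) d : ∃ i : ℤ, (g ^ i) ((⟦d⟧ : Qt g).out) = d).choose_spec

noncomputable def fixedEquiv : (fixedBy (Xsp D m) g) ≃ ∀ c : Qt g, Yt g m (szQ g c) where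
  toFun f c := ⟨(f.1 c.out).1, (f.1 c.out).2, by
    intro x hx
    have hfix : (g ^ (szQ g c : ℤ)) c.out = c.out :=
      (zpow_apply_eq_iff_len_dvd g c.out _).mpr dvd_rfl
    have heq := fixed_equivar g m f.2 (szQ g c : ℤ) c.out
    rw [hfix] at heq
    have hlist : ((toL (f.1 c.out).1).map ⇑(g ^ (szQ g c : ℤ))) = toL (f.1 c.out).1 := by
      conv_rhs => rw [heq]
      rw [toL_map]
    have := list_map_eq_self hlist x hx
    rwa [zpow_natCast] at this⟩
  invFun h := ⟨fun d => ⟨map ⇑(g ^ expn g d) (h ⟦d⟧).1, by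
      rw [length_map]; exact (h ⟦d⟧).2.1⟩, by
    show g • _ = _
    funext d
    apply Subtype.ext
    rw [smul_apply]
    show map ⇑g (map ⇑(g ^ expn g (g⁻¹ d)) (h ⟦g⁻¹ d⟧).1) = map ⇑(g ^ expn g d) (h ⟦d⟧).1
    have hq : (⟦g⁻¹ d⟧ : Qt g) = ⟦d⟧ :=
      Quotient.sound (⟨1, by simp⟩ : g.SameCycle (g⁻¹ d) d)
    have hspec := expn_spec g (g⁻¹ d)
    rw [hq] at hspec
    rw [hq]
    rw [map_map', ← Equiv.Perm.coe_mul, ← zpow_one_add]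
    apply map_zpow_congr g _ (fun x hx => by
      have := (h ⟦d⟧).2.2 x hx
      rwa [szQ_mk] at this)
    rw [show len g d = len g ((⟦d⟧ : Qt g).out) from
      (sameCycle_len_eq g (Quotient.mk_out (s := scSetoid g) d : g.SameCycle _ d)).symm]
    rw [← zpow_apply_eq_iff_len_dvd g ((⟦d⟧ : Qt g).out)]
    apply zpow_sub_fix g _ (expn_spec g d)
    rw [zpow_one_add, Equiv.Perm.mul_apply, hspec]
    exact Equiv.apply_symm_apply g d⟩
  left_inv f := by
    apply Subtype.ext
    funext d
    apply Subtype.ext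
    show map ⇑(g ^ expn g d) (f.1 (⟦d⟧ : Qt g).out).1 = (f.1 d).1
    rw [← fixed_equivar g m f.2, expn_spec]
  right_inv h := by
    funext c
    apply Subtype.ext
    show map ⇑(g ^ expn g c.out) (h ⟦c.out⟧).1 = (h c).1
    have hq : (⟦c.out⟧ : Qt g) = c := Quotient.out_eq c
    have hspec := expn_spec g c.out
    rw [hq] at hspec
    rw [hq]
    have h0 : map ⇑(g ^ (0 : ℤ)) (h c).1 = (h c).1 := by
      rw [zpow_zero]
      show map ⇑(1 : Equiv.Perm D) _ = _
      rw [Equiv.Perm.coe_one]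
      exact map_id' _
    conv_rhs => rw [← h0]
    apply map_zpow_congr g _ (fun x hx => (h c).2.2 x hx)
    rw [sub_zero]
    show ((len g c.out : ℕ) : ℤ) ∣ _
    rw [← zpow_apply_eq_iff_len_dvd g c.out]
    exact hspec

theorem card_fixedBy_eq :
    Nat.card (fixedBy (Xsp D m) g)
      = ((fullCycleType g).map fun ki =>
          ∑ k ∈ Finset.Icc 1 m, (∑ j ∈ ki.divisors, j * cycleCount g j) ^ k).prod := by
  classical
  rw [Nat.card_congr (fixedEquiv g m), Nat.card_pi]
  have h1 : ∀ c : Qt g, Nat.card (Yt g m (szQ g c))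
      = ∑ k ∈ Finset.Icc 1 m, (∑ j ∈ (szQ g c).divisors, j * cycleCount g j) ^ k := by
    intro c
    rw [show Yt g m (szQ g c)
      = {w : FreeSemigroup D // w.length ≤ m ∧ ∀ x ∈ toL w, (g ^ (szQ g c)) x = x} from rfl]
    rw [card_words]
    apply Finset.sum_congr rfl
    intro k _
    congr 1
    rw [Nat.card_eq_fintype_card, Fintype.card_subtype]
    exact card_fixed_pow g _ (by have := one_le_len g c.out; unfold szQ; omega)
  rw [Finset.prod_congr rfl (fun c _ => h1 c), Finset.prod_eq_multiset_prod,
    ← multiset_szQ_eq g, Multiset.map_map]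
  rfl

theorem finite_Wrd : Finite (Wrd D m) := by
  have := finite_words (α := D) (fun _ => True) m
  exact Finite.of_injective
    (fun w => (⟨w.1, w.2, fun _ _ => trivial⟩ :
      {w : FreeSemigroup D // w.length ≤ m ∧ ∀ x ∈ toL w, True}))
    (by
      intro a b h
      apply Subtype.ext
      exact congrArg (fun w : {w : FreeSemigroup D // w.length ≤ m ∧ ∀ x ∈ toL w, True} => w.1) h)

end Action

end MEndAux

open MEndAux

/-- **Theorem 1.** If `|D| = n`, the number of `m`-endomorphisms on the free semigroup `D⁺`,
up to combinatorial equivalence, is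
`(1/n!) · Σ_{g ∈ Sym(D)} ∏_{cycle lengths kᵢ of g} (Σ_{k=1}^m (Σ_{j ∣ kᵢ} j·c(g,j))^k)`. -/
theorem number_of_m_endomorphisms_up_to_combinatorial_equivalence
    {D : Type*} [Fintype D] [DecidableEq D] {n m : ℕ} (hn : 1 ≤ n) (hm : 1 ≤ m)
    (hcard : Fintype.card D = n) :
    (Nat.card (Quot (fun φ ψ : {φ : FreeSemigroup D →ₙ* FreeSemigroup D //
          ∀ d : D, (φ (FreeSemigroup.of d)).length ≤ m} =>
        ∃ g : Equiv.Perm D,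
          (ψ : FreeSemigroup D →ₙ* FreeSemigroup D).comp (FreeSemigroup.map ⇑g)
            = (FreeSemigroup.map ⇑g).comp
                (φ : FreeSemigroup D →ₙ* FreeSemigroup D))) : ℚ)
      = (1 / (n.factorial : ℚ)) * ∑ g : Equiv.Perm D,
          ((((fullCycleType g).map (fun ki =>
            ∑ k ∈ Finset.Icc 1 m,
              (∑ j ∈ ki.divisors, j * cycleCount g j) ^ k)).prod : ℕ) : ℚ) := by
  classical
  subst hcard
  have hW : Finite (Wrd D m) := finite_Wrd m
  have hX : Finite (Xsp D m) := Pi.finite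
  letI : Fintype (Xsp D m) := Fintype.ofFinite _
  letI : Fintype (Quotient (MulAction.orbitRel (Equiv.Perm D) (Xsp D m))) := Fintype.ofFinite _
  letI : ∀ σ : Equiv.Perm D, Fintype (MulAction.fixedBy (Xsp D m) σ) :=
    fun σ => Fintype.ofFinite _
  -- the equivalence between bounded hom subtype and Xsp
  let E : {φ : FreeSemigroup D →ₙ* FreeSemigroup D //
      ∀ d : D, (φ (FreeSemigroup.of d)).length ≤ m} ≃ Xsp D m :=
    { toFun := fun φ => fun d => ⟨φ.1 (FreeSemigroup.of d), φ.2 d⟩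
      invFun := fun f => ⟨FreeSemigroup.lift (fun d => (f d).1), fun d => by
        rw [FreeSemigroup.lift_of]; exact (f d).2⟩
      left_inv := fun φ => by
        apply Subtype.ext
        apply FreeSemigroup.hom_ext
        funext d
        simp
      right_inv := fun f => by
        funext d
        apply Subtype.ext
        simp }
  have hrel : ∀ a b : {φ : FreeSemigroup D →ₙ* FreeSemigroup D //
      ∀ d : D, (φ (FreeSemigroup.of d)).length ≤ m},
      (∃ g : Equiv.Perm D,
          (b : FreeSemigroup D →ₙ* FreeSemigroup D).comp (FreeSemigroup.map ⇑g)
            = (FreeSemigroup.map ⇑g).comp (a : FreeSemigroup D →ₙ* FreeSemigroup D)) ↔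
        (MulAction.orbitRel (Equiv.Perm D) (Xsp D m)).r (E a) (E b) := by
    intro a b
    have key : ∀ g : Equiv.Perm D,
        (b : FreeSemigroup D →ₙ* FreeSemigroup D).comp (FreeSemigroup.map ⇑g)
          = (FreeSemigroup.map ⇑g).comp (a : FreeSemigroup D →ₙ* FreeSemigroup D)
        ↔ E b = g • E a := by
      intro g
      constructor
      · intro h
        funext d
        apply Subtype.ext
        rw [MEndAux.smul_apply]
        show b.1 (FreeSemigroup.of d) = FreeSemigroup.map ⇑g (a.1 (FreeSemigroup.of (g⁻¹ d)))
        have := DFunLike.congr_fun h (FreeSemigroup.of (g⁻¹ d))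
        simpa using this
      · intro h
        apply FreeSemigroup.hom_ext
        funext d
        show b.1 (FreeSemigroup.map ⇑g (FreeSemigroup.of d)) = FreeSemigroup.map ⇑g (a.1 (FreeSemigroup.of d))
        rw [FreeSemigroup.map_of]
        have := congrFun h (g d)
        have h2 := congrArg Subtype.val this
        rw [MEndAux.smul_apply] at h2
        simp at h2
        exact h2
    constructor
    · rintro ⟨g, hg⟩
      have : E b = g • E a := (key g).mp hg
      have hmem : E b ∈ MulAction.orbit (Equiv.Perm D) (E a) := ⟨g, this.symm⟩
      exact (MulAction.orbitRel (Equiv.Perm D) (Xsp D m)).iseqv.symm hmem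
    · intro h
      have h' : E b ∈ MulAction.orbit (Equiv.Perm D) (E a) :=
        (MulAction.orbitRel (Equiv.Perm D) (Xsp D m)).iseqv.symm h
      obtain ⟨g, hg⟩ := h'
      exact ⟨g, (key g).mpr hg.symm⟩
  have hquot : Nat.card (Quot (fun φ ψ : {φ : FreeSemigroup D →ₙ* FreeSemigroup D //
          ∀ d : D, (φ (FreeSemigroup.of d)).length ≤ m} =>
        ∃ g : Equiv.Perm D,
          (ψ : FreeSemigroup D →ₙ* FreeSemigroup D).comp (FreeSemigroup.map ⇑g)
            = (FreeSemigroup.map ⇑g).comp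
                (φ : FreeSemigroup D →ₙ* FreeSemigroup D)))
      = Fintype.card (Quotient (MulAction.orbitRel (Equiv.Perm D) (Xsp D m))) := by
    rw [← Nat.card_eq_fintype_card]
    exact Nat.card_congr (Quot.congr E hrel)
  have hb := MulAction.sum_card_fixedBy_eq_card_orbits_mul_card_group
    (Equiv.Perm D) (Xsp D m)
  have hfix : ∀ σ : Equiv.Perm D,
      (Fintype.card (MulAction.fixedBy (Xsp D m) σ) : ℚ)
        = ((((fullCycleType σ).map (fun ki =>
            ∑ k ∈ Finset.Icc 1 m,
              (∑ j ∈ ki.divisors, j * cycleCount σ j) ^ k)).prod : ℕ) : ℚ) := by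
    intro σ
    rw [← Nat.card_eq_fintype_card, card_fixedBy_eq]
  have hperm : Fintype.card (Equiv.Perm D) = (Fintype.card D).factorial :=
    Fintype.card_perm
  rw [one_div, inv_mul_eq_div, eq_div_iff (by
    exact_mod_cast Nat.factorial_ne_zero (Fintype.card D))]
  rw [← Finset.sum_congr rfl (fun σ _ => hfix σ)]
  push_cast
  rw [← Nat.cast_sum]
  rw [hb, hperm, hquot]
  push_cast
  ring
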